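/- arXiv:2408.03711 — 2 statements merged into one kernel-verified Lean document; each statement's English description precedes it below -/
import Mathlib

section
/- Let n ≥ 2 and m ≥ 0 be integers, let φ : 𝔻 → 𝔻 be holomorphic, let c : 𝔻ⁿ → ℂ be holomorphic, and let f : 𝔻ⁿ → ℂ be holomorphic such that (∂₁^i f)(z₁, z₁, z₂, …, z_{n−1}) = 0 for all (z₁, …, z_{n−1}) ∈ 𝔻^{n−1} and all 0 ≤ i ≤ m. Then the holomorphic function g(z₁, …, z_n) := c(z₁, …, z_n) · f(φ(z₁), …, φ(z_n)) satisfies (∂₁^i g)(z₁, z₁, z₂, …, z_{n−1}) = 0 for all (z₁, …, z_{n−1}) ∈ 𝔻^{n−1} and all 0 ≤ i ≤ m. (The pointwise content of Proposition 2.11: each subspace M_{k_n} of functions whose first m ∂₁-derivatives vanish on Δ_n = {(z₁, z₁, z₂, …, z_{n−1})} is invariant under every weighted composition operator.) -/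
open Metric Set

/-- The partial derivative with respect to the first variable of a function of `n + 2`
complex variables. -/
noncomputable def d1p (n : ℕ) (f : (Fin (n + 2) → ℂ) → ℂ) : (Fin (n + 2) → ℂ) → ℂ :=
  fun z => deriv (fun t => f (Function.update z 0 t)) (z 0)

/- ### Auxiliary one-variable lemmas -/

private lemma ederiv_iter {f₁ f₂ : ℂ → ℂ} {x : ℂ} (h : f₁ =ᶠ[nhds x] f₂) (k : ℕ) :
    deriv^[k] f₁ =ᶠ[nhds x] deriv^[k] f₂ := by
  induction k with
  | zero => exact h
  | succ k ih => rw [Function.iterate_succ_apply', Function.iterate_succ_apply']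
                 exact ih.deriv

private lemma analyticAt_deriv {g : ℂ → ℂ} {x : ℂ} (h : AnalyticAt ℂ g x) :
    AnalyticAt ℂ (deriv g) x := by
  obtain ⟨s, hs, hsan⟩ := h.exists_mem_nhds_analyticOnNhd
  exact hsan.deriv x (mem_of_mem_nhds hs)

private lemma pow_mul_iter_deriv (x : ℂ) : ∀ (p : ℕ) (g : ℂ → ℂ), AnalyticAt ℂ g x →
    (∀ k < p, deriv^[k] (fun t => (t - x) ^ p * g t) x = 0) ∧
    deriv^[p] (fun t => (t - x) ^ p * g t) x = (p.factorial : ℂ) * g x := by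
  intro p
  induction p with
  | zero =>
    intro g _
    refine ⟨fun k hk => absurd hk (Nat.not_lt_zero k), ?_⟩
    simp
  | succ p ih =>
    intro g hg
    have hg' : AnalyticAt ℂ (deriv g) x := analyticAt_deriv hg
    have hG : AnalyticAt ℂ (fun t => ((p : ℂ) + 1) * g t + (t - x) * deriv g t) x :=
      (analyticAt_const.mul hg).add ((analyticAt_id.sub analyticAt_const).mul hg')
    have key : deriv (fun t => (t - x) ^ (p + 1) * g t) =ᶠ[nhds x]
        fun t => (t - x) ^ p * (((p : ℂ) + 1) * g t + (t - x) * deriv g t) := by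
      filter_upwards [hg.eventually_analyticAt] with t ht
      have h1 : HasDerivAt (fun t : ℂ => (t - x) ^ (p + 1))
          ((↑(p + 1) : ℂ) * (t - x) ^ p) t := by
        simpa using ((hasDerivAt_id t).sub_const x).fun_pow (p + 1)
      have h2 : HasDerivAt g (deriv g t) t := ht.differentiableAt.hasDerivAt
      rw [(h1.fun_mul h2).deriv]
      push_cast
      ring
    have IHG := ih (fun t => ((p : ℂ) + 1) * g t + (t - x) * deriv g t) hG
    constructor
    · intro k hk
      match k with
      | 0 => simp
      | (j + 1) =>
        rw [Function.iterate_succ_apply, (ederiv_iter key j).eq_of_nhds]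
        exact IHG.1 j (by omega)
    · rw [Function.iterate_succ_apply, (ederiv_iter key p).eq_of_nhds, IHG.2]
      simp only [sub_self, zero_mul, add_zero]
      push_cast [Nat.factorial_succ]
      ring

private lemma exists_factor {f : ℂ → ℂ} {x : ℂ} (hf : AnalyticAt ℂ f x) (m : ℕ)
    (hv : ∀ k ≤ m, deriv^[k] f x = 0) :
    ∃ h : ℂ → ℂ, AnalyticAt ℂ h x ∧ ∀ᶠ t in nhds x, f t = (t - x) ^ (m + 1) * h t := by
  by_cases h0 : ∀ᶠ t in nhds x, f t = 0
  · exact ⟨0, analyticAt_const, by filter_upwards [h0] with t ht; simp [ht]⟩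
  · obtain ⟨nn, g, hg, hgne, heq⟩ := hf.exists_eventuallyEq_pow_smul_nonzero_iff.mpr h0
    have heq' : ∀ᶠ t in nhds x, f t = (t - x) ^ nn * g t := by
      filter_upwards [heq] with t ht; rw [ht, smul_eq_mul]
    have hn : m + 1 ≤ nn := by
      by_contra hlt
      push_neg at hlt
      have h1 : deriv^[nn] f x = 0 := hv nn (by omega)
      rw [(ederiv_iter heq' nn).eq_of_nhds, (pow_mul_iter_deriv x nn g hg).2] at h1
      exact hgne (by
        rcases mul_eq_zero.mp h1 with h | h
        · exact absurd h (Nat.cast_ne_zero.mpr nn.factorial_ne_zero)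
        · exact h)
    obtain ⟨d, rfl⟩ := Nat.exists_eq_add_of_le hn
    refine ⟨fun t => (t - x) ^ d * g t,
      ((analyticAt_id.sub analyticAt_const).pow d).mul hg, ?_⟩
    filter_upwards [heq'] with t ht
    rw [ht, pow_add]
    ring

private lemma one_var {F C φ : ℂ → ℂ} {t₀ : ℂ} (m : ℕ)
    (hF : AnalyticAt ℂ F (φ t₀)) (hC : AnalyticAt ℂ C t₀) (hφan : AnalyticAt ℂ φ t₀)
    (hv : ∀ k ≤ m, deriv^[k] F (φ t₀) = 0) :
    ∀ i ≤ m, deriv^[i] (fun t => C t * F (φ t)) t₀ = 0 := by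
  obtain ⟨h, hh, hFe⟩ := exists_factor hF m hv
  have hA : AnalyticAt ℂ (fun t => φ t - φ t₀) t₀ := hφan.sub analyticAt_const
  obtain ⟨ψ, hψ, hψe⟩ := exists_factor hA 0
    (fun k hk => by obtain rfl : k = 0 := Nat.le_zero.mp hk; simp)
  have hcont : ContinuousAt φ t₀ := hφan.continuousAt
  have hFφ : ∀ᶠ t in nhds t₀, F (φ t) = (φ t - φ t₀) ^ (m + 1) * h (φ t) :=
    hcont.eventually hFe
  have hG : AnalyticAt ℂ (fun t => ψ t ^ (m + 1) * (C t * h (φ t))) t₀ :=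
    (hψ.pow (m + 1)).mul (hC.mul (hh.comp hφan))
  have key : (fun t => C t * F (φ t)) =ᶠ[nhds t₀]
      fun t => (t - t₀) ^ (m + 1) * (ψ t ^ (m + 1) * (C t * h (φ t))) := by
    filter_upwards [hFφ, hψe] with t h1 h2
    simp only [zero_add, pow_one] at h2
    rw [h1, h2, mul_pow]
    ring
  intro i hi
  rw [(ederiv_iter key i).eq_of_nhds]
  exact (pow_mul_iter_deriv t₀ (m + 1) _ hG).1 i (by omega)

/- ### Reduction of `d1p` iterates to one-variable iterated derivatives -/

private lemma d1p_iter_eq (n : ℕ) (i : ℕ) :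
    ∀ (f : (Fin (n + 2) → ℂ) → ℂ) (z : Fin (n + 2) → ℂ),
      (d1p n)^[i] f z = deriv^[i] (fun t => f (Function.update z 0 t)) (z 0) := by
  induction i with
  | zero => intro f z; simp [Function.update_eq_self]
  | succ i ih =>
    intro f z
    rw [Function.iterate_succ_apply, ih (d1p n f) z]
    have h1 : (fun t => d1p n f (Function.update z 0 t))
        = deriv (fun t => f (Function.update z 0 t)) := by
      funext t
      simp [d1p, Function.update_idem]
    rw [h1, ← Function.iterate_succ_apply]

private lemma update_cons (a t : ℂ) {k : ℕ} (ξ : Fin (k + 1) → ℂ) :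
    Function.update (Fin.cons a ξ : Fin (k + 2) → ℂ) 0 t = Fin.cons t ξ := by
  funext l
  refine Fin.cases ?_ (fun j => ?_) l
  · simp
  · rw [Function.update_of_ne (Fin.succ_ne_zero j)]
    simp

private lemma d1p_iter_cons (n : ℕ) (i : ℕ) (f : (Fin (n + 2) → ℂ) → ℂ)
    (ξ : Fin (n + 1) → ℂ) :
    (d1p n)^[i] f (Fin.cons (ξ 0) ξ) = deriv^[i] (fun t => f (Fin.cons t ξ)) (ξ 0) := by
  rw [d1p_iter_eq]
  have h1 : (fun t => f (Function.update (Fin.cons (ξ 0) ξ : Fin (n + 2) → ℂ) 0 t))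
      = fun t => f (Fin.cons t ξ) := by
    funext t
    rw [update_cons]
  rw [h1, Fin.cons_zero]

private lemma cons_diff {k : ℕ} (η : Fin (k + 1) → ℂ) :
    Differentiable ℂ (fun s : ℂ => (Fin.cons s η : Fin (k + 2) → ℂ)) := by
  rw [differentiable_pi]
  intro l
  refine Fin.cases ?_ (fun j => ?_) l
  · simp only [Fin.cons_zero]
    exact differentiable_id
  · simp only [Fin.cons_succ]
    exact differentiable_const (η j)

private lemma cons_mapsTo {k : ℕ} (η : Fin (k + 1) → ℂ) (hη : ∀ l, η l ∈ ball (0 : ℂ) 1) :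
    MapsTo (fun s : ℂ => (Fin.cons s η : Fin (k + 2) → ℂ)) (ball (0 : ℂ) 1)
      (Set.univ.pi fun _ : Fin (k + 2) => ball (0 : ℂ) 1) := by
  intro s hs l _
  refine Fin.cases ?_ (fun j => ?_) l
  · simpa using hs
  · simpa using hη j

/-- pointwise content of Proposition 2.11: on the polydisc `𝔻ⁿ` (here
`n + 2 ≥ 2` variables), the space of holomorphic functions whose first `m` partial
derivatives `∂₁^i` vanish on `Δ_n = {(z₁, z₁, z₂, …, z_{n−1})}` is invariant under every
weighted composition operator `f ↦ c · (f ∘ (φ, …, φ))`. -/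
theorem stmt14 (n m : ℕ) (φ : ℂ → ℂ) (c f : (Fin (n + 2) → ℂ) → ℂ)
    (hφmap : MapsTo φ (ball (0 : ℂ) 1) (ball (0 : ℂ) 1))
    (hφ : DifferentiableOn ℂ φ (ball (0 : ℂ) 1))
    (hc : DifferentiableOn ℂ c (Set.univ.pi fun _ : Fin (n + 2) => ball (0 : ℂ) 1))
    (hf : DifferentiableOn ℂ f (Set.univ.pi fun _ : Fin (n + 2) => ball (0 : ℂ) 1))
    (hvanish : ∀ i ≤ m, ∀ ζ : Fin (n + 1) → ℂ, (∀ l, ζ l ∈ ball (0 : ℂ) 1) →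
      (d1p n)^[i] f (Fin.cons (ζ 0) ζ) = 0) :
    ∀ i ≤ m, ∀ ζ : Fin (n + 1) → ℂ, (∀ l, ζ l ∈ ball (0 : ℂ) 1) →
      (d1p n)^[i] (fun z => c z * f (fun l => φ (z l))) (Fin.cons (ζ 0) ζ) = 0 := by
  intro i hi ζ hζ
  set ξ : Fin (n + 1) → ℂ := fun l => φ (ζ l) with hξdef
  have hξ : ∀ l, ξ l ∈ ball (0 : ℂ) 1 := fun l => hφmap (hζ l)
  rw [d1p_iter_cons]
  have hrw : (fun t => (fun z => c z * f (fun l => φ (z l))) (Fin.cons t ζ))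
      = fun t => c (Fin.cons t ζ) * f (Fin.cons (φ t) ξ) := by
    funext t
    have h2 : (fun l => φ ((Fin.cons t ζ : Fin (n + 2) → ℂ) l)) = Fin.cons (φ t) ξ := by
      funext l
      refine Fin.cases ?_ (fun j => ?_) l <;> simp [hξdef]
    simp only [h2]
  rw [hrw]
  -- analyticity of the one-variable slices
  have hFan : AnalyticAt ℂ (fun s => f (Fin.cons s ξ)) (φ (ζ 0)) := by
    have : DifferentiableOn ℂ (fun s => f (Fin.cons s ξ)) (ball (0 : ℂ) 1) :=
      hf.comp (cons_diff ξ).differentiableOn (cons_mapsTo ξ hξ)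
    exact this.analyticAt (isOpen_ball.mem_nhds (hξ 0))
  have hCan : AnalyticAt ℂ (fun t => c (Fin.cons t ζ)) (ζ 0) := by
    have : DifferentiableOn ℂ (fun t => c (Fin.cons t ζ)) (ball (0 : ℂ) 1) :=
      hc.comp (cons_diff ζ).differentiableOn (cons_mapsTo ζ hζ)
    exact this.analyticAt (isOpen_ball.mem_nhds (hζ 0))
  have hφan : AnalyticAt ℂ φ (ζ 0) := hφ.analyticAt (isOpen_ball.mem_nhds (hζ 0))
  have hv : ∀ k ≤ m, deriv^[k] (fun s => f (Fin.cons s ξ)) (φ (ζ 0)) = 0 := by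
    intro k hk
    have := hvanish k hk ξ hξ
    rw [d1p_iter_cons] at this
    exact this
  exact one_var m hFan hCan hφan hv i hi
end

section
/- For every integer n ≥ 0, every w ∈ 𝔻, and j = 1, 2, one has P_n M_j* P_n k_{(w,w)}^{(n)} = conj(w) · P_n k_{(w,w)}^{(n)}. In other words, the compression to S_n of the adjoint of each coordinate multiplication operator has the projected kernel vectors P_n k_{(w,w)}^{(n)} as eigenvectors with eigenvalue conj(w). (Proposition 3.5: via the unitary Γ_n, the compression P_n M_{z_j}*|_{S_n} is the adjoint of the multiplication operator on the reduced reproducing kernel Hilbert space A_n.) -/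
open Metric Set

/-- The partial derivative of a function of two complex variables with respect to
the first variable. -/
noncomputable def d1 (f : ℂ × ℂ → ℂ) : ℂ × ℂ → ℂ :=
  fun p => deriv (fun z => f (z, p.2)) p.1

open scoped InnerProductSpace

lemma d1_iter_slice (f : ℂ × ℂ → ℂ) (c : ℂ) :
    ∀ (i : ℕ) (z : ℂ), d1^[i] f (z, c) = deriv^[i] (fun y => f (y, c)) z := by
  intro i
  induction i with
  | zero => intro z; rfl
  | succ i ih =>
      intro z
      rw [Function.iterate_succ_apply', Function.iterate_succ_apply']
      show deriv (fun y => d1^[i] f (y, c)) z = _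
      congr 1
      funext y; exact ih y

lemma eqOn_deriv_iter {f g : ℂ → ℂ} {s : Set ℂ} (hs : IsOpen s) (h : Set.EqOn f g s) :
    ∀ i : ℕ, Set.EqOn (deriv^[i] f) (deriv^[i] g) s := by
  intro i
  induction i with
  | zero => exact h
  | succ i ih =>
      intro z hz
      rw [Function.iterate_succ_apply', Function.iterate_succ_apply']
      exact Filter.EventuallyEq.deriv_eq (Filter.eventuallyEq_of_mem (hs.mem_nhds hz) ih)

lemma deriv_iter_const_mul (c : ℂ) (F : ℂ → ℂ) :
    ∀ (i : ℕ) (z : ℂ), deriv^[i] (fun y => c * F y) z = c * deriv^[i] F z := by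
  intro i
  induction i with
  | zero => intro z; rfl
  | succ i ih =>
      intro z
      rw [Function.iterate_succ_apply', Function.iterate_succ_apply']
      have h : deriv^[i] (fun y => c * F y) = fun y => c * deriv^[i] F y := funext ih
      rw [h, deriv_const_mul_field]

lemma deriv_iter_id_mul {F : ℂ → ℂ} {s : Set ℂ} (hs : IsOpen s)
    (hF : ∀ (i : ℕ), ∀ z ∈ s, DifferentiableAt ℂ (deriv^[i] F) z) :
    ∀ (i : ℕ), ∀ z ∈ s, deriv^[i + 1] (fun y => y * F y) z
      = ((i : ℂ) + 1) * deriv^[i] F z + z * deriv^[i + 1] F z := by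
  intro i
  induction i with
  | zero =>
      intro z hz
      have h0 : DifferentiableAt ℂ F z := by simpa using hF 0 z hz
      rw [Function.iterate_one, deriv_fun_mul differentiableAt_fun_id h0, deriv_id'']
      simp [Function.iterate_one]
  | succ i ih =>
      intro z hz
      have heq : Set.EqOn (deriv^[i + 1] (fun y => y * F y))
          (fun y => ((i : ℂ) + 1) * deriv^[i] F y + y * deriv^[i + 1] F y) s := ih
      rw [Function.iterate_succ_apply' _ (i + 1),
        Filter.EventuallyEq.deriv_eq (Filter.eventuallyEq_of_mem (hs.mem_nhds hz) heq)]
      have d1' : DifferentiableAt ℂ (fun y => ((i : ℂ) + 1) * deriv^[i] F y) z :=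
        (hF i z hz).const_mul _
      have d2' : DifferentiableAt ℂ (fun y => y * deriv^[i + 1] F y) z :=
        differentiableAt_fun_id.mul (hF (i + 1) z hz)
      rw [deriv_fun_add d1' d2', deriv_const_mul_field,
        deriv_fun_mul differentiableAt_fun_id (hF (i + 1) z hz), deriv_id'']
      rw [← Function.iterate_succ_apply' deriv i, ← Function.iterate_succ_apply' deriv (i + 1)]
      push_cast
      ring

lemma slice_deriv_diff {f : ℂ × ℂ → ℂ}
    (hf : DifferentiableOn ℂ f (ball (0 : ℂ) 1 ×ˢ ball (0 : ℂ) 1)) {c : ℂ}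
    (hc : c ∈ ball (0 : ℂ) 1) :
    ∀ (i : ℕ), ∀ z ∈ ball (0 : ℂ) 1, DifferentiableAt ℂ (deriv^[i] (fun y => f (y, c))) z := by
  have hd : DifferentiableOn ℂ (fun y => f (y, c)) (ball (0 : ℂ) 1) :=
    hf.comp ((Differentiable.prodMk differentiable_fun_id (differentiable_const c)).differentiableOn)
      (fun y hy => ⟨hy, hc⟩)
  have han : ∀ i : ℕ, AnalyticOnNhd ℂ (deriv^[i] (fun y => f (y, c))) (ball (0 : ℂ) 1) := by
    intro i
    induction i with
    | zero => exact hd.analyticOnNhd isOpen_ball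
    | succ i ih =>
        rw [Function.iterate_succ_apply']
        exact ih.deriv
  exact fun i z hz => ((han i) z hz).differentiableAt

/-- Proposition 3.5: the compression to `S_n` of the adjoint of each
coordinate multiplication operator has the projected kernel vectors `P_n k_{(w,w)}^{(n)}`
as eigenvectors with eigenvalue `conj(w)`:
`P_n M_j* P_n k_{(w,w)}^{(n)} = conj(w) · P_n k_{(w,w)}^{(n)}` for `j = 1, 2`. -/
theorem stmt19
    {H : Type*} [NormedAddCommGroup H] [InnerProductSpace ℂ H] [CompleteSpace H]
    (J : H →ₗ[ℂ] (ℂ × ℂ → ℂ)) (hJinj : Function.Injective J)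
    (hJhol : ∀ f : H, DifferentiableOn ℂ (J f) (ball (0 : ℂ) 1 ×ˢ ball (0 : ℂ) 1))
    (k : ℂ × ℂ → ℕ → H)
    (hk : ∀ f : H, ∀ w ∈ ball (0 : ℂ) 1 ×ˢ ball (0 : ℂ) 1, ∀ j : ℕ,
      @inner ℂ H _ (k w j) f = d1^[j] (J f) w)
    (M : ℕ → Submodule ℂ H)
    (hM : ∀ (m : ℕ) (f : H),
      f ∈ M m ↔ ∀ i ≤ m, ∀ z ∈ ball (0 : ℂ) 1, d1^[i] (J f) (z, z) = 0)
    (hMclosed : ∀ m : ℕ, IsClosed (M m : Set H))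
    (S : ℕ → Submodule ℂ H)
    (hS0 : S 0 = (M 0)ᗮ)
    (hSsucc : ∀ m : ℕ, S (m + 1) = M m ⊓ (M (m + 1))ᗮ)
    (P : ℕ → H → H)
    (hPmem : ∀ (m : ℕ) (f : H), P m f ∈ S m)
    (hPorth : ∀ (m : ℕ) (f : H), f - P m f ∈ (S m)ᗮ)
    (M₁ M₂ : H →L[ℂ] H)
    (hM₁ : ∀ f : H, ∀ z ∈ ball (0 : ℂ) 1 ×ˢ ball (0 : ℂ) 1, J (M₁ f) z = z.1 * J f z)
    (hM₂ : ∀ f : H, ∀ z ∈ ball (0 : ℂ) 1 ×ˢ ball (0 : ℂ) 1, J (M₂ f) z = z.2 * J f z) :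
    ∀ n : ℕ, ∀ w ∈ ball (0 : ℂ) 1,
      P n (ContinuousLinearMap.adjoint M₁ (P n (k (w, w) n)))
          = (starRingEnd ℂ) w • P n (k (w, w) n) ∧
      P n (ContinuousLinearMap.adjoint M₂ (P n (k (w, w) n)))
          = (starRingEnd ℂ) w • P n (k (w, w) n) := by
  -- monotonicity of M
  have hMmono : ∀ m : ℕ, M (m + 1) ≤ M m := by
    intro m f hf
    rw [hM]
    intro i hi z hz
    exact (hM (m + 1) f).mp hf i (hi.trans (Nat.le_succ m)) z hz
  -- projection facts
  have hPid : ∀ (n : ℕ) (f : H), f ∈ S n → P n f = f := by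
    intro n f hf
    have h1 : f - P n f ∈ S n := Submodule.sub_mem _ hf (hPmem n f)
    have h2 : ⟪f - P n f, f - P n f⟫_ℂ = 0 :=
      (Submodule.mem_orthogonal' _ _).mp (hPorth n f) _ h1
    have h3 : f - P n f = 0 := inner_self_eq_zero.mp h2
    symm
    exact sub_eq_zero.mp h3
  have hinner_P : ∀ (n : ℕ) (g f : H), g ∈ S n → ⟪g, P n f⟫_ℂ = ⟪g, f⟫_ℂ := by
    intro n g f hg
    have h : ⟪g, f - P n f⟫_ℂ = 0 := (Submodule.mem_orthogonal _ _).mp (hPorth n f) _ hg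
    rw [inner_sub_right] at h
    linear_combination -h
  -- key: members of (S n)ᗮ that lie in "M (n-1)" lie in M n
  have hard : ∀ (n : ℕ) (v : H), v ∈ (S n)ᗮ → (∀ m : ℕ, n = m + 1 → v ∈ M m) → v ∈ M n := by
    intro n v hvo hvp
    cases n with
    | zero =>
        rw [hS0] at hvo
        haveI := (hMclosed 0).completeSpace_coe
        rwa [Submodule.orthogonal_orthogonal] at hvo
    | succ m =>
        have hvM : v ∈ M m := hvp m rfl
        haveI := (hMclosed (m + 1)).completeSpace_coe
        set p := (Submodule.orthogonalProjectionOnto (M (m + 1)) v : H) with hp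
        have hpMem : p ∈ M (m + 1) := SetLike.coe_mem _
        have hqo : v - p ∈ (M (m + 1))ᗮ := Submodule.sub_starProjection_mem_orthogonal (K := M (m + 1)) v
        have hqM : v - p ∈ M m := Submodule.sub_mem _ hvM (hMmono m hpMem)
        have hqS : v - p ∈ S (m + 1) := by rw [hSsucc]; exact ⟨hqM, hqo⟩
        have h1 : ⟪v - p, v⟫_ℂ = 0 := by
          have := (Submodule.mem_orthogonal _ _).mp hvo _ hqS
          exact this
        have h2 : ⟪v - p, p⟫_ℂ = 0 := (Submodule.mem_orthogonal' _ _).mp hqo _ hpMem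
        have h3 : ⟪v - p, v - p⟫_ℂ = 0 := by rw [inner_sub_right, h1, h2, sub_zero]
        have h4 : v = p := (sub_eq_zero.mp (inner_self_eq_zero.mp h3))
        rw [h4]
        exact hpMem
  -- derivative identities
  have key2 : ∀ (f : H) (c : ℂ), c ∈ ball (0 : ℂ) 1 → ∀ (i : ℕ), ∀ z ∈ ball (0 : ℂ) 1,
      d1^[i] (J (M₂ f)) (z, c) = c * d1^[i] (J f) (z, c) := by
    intro f c hc i z hz
    rw [d1_iter_slice, d1_iter_slice]
    have heq : Set.EqOn (fun y => J (M₂ f) (y, c)) (fun y => c * J f (y, c))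
        (ball (0 : ℂ) 1) := fun y hy => hM₂ f (y, c) ⟨hy, hc⟩
    rw [eqOn_deriv_iter isOpen_ball heq i hz, deriv_iter_const_mul]
  have key1 : ∀ (f : H) (c : ℂ), c ∈ ball (0 : ℂ) 1 → ∀ (i : ℕ), ∀ z ∈ ball (0 : ℂ) 1,
      d1^[i + 1] (J (M₁ f)) (z, c)
        = ((i : ℂ) + 1) * d1^[i] (J f) (z, c) + z * d1^[i + 1] (J f) (z, c) := by
    intro f c hc i z hz
    rw [d1_iter_slice, d1_iter_slice, d1_iter_slice]
    have heq : Set.EqOn (fun y => J (M₁ f) (y, c)) (fun y => y * J f (y, c))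
        (ball (0 : ℂ) 1) := fun y hy => hM₁ f (y, c) ⟨hy, hc⟩
    rw [eqOn_deriv_iter isOpen_ball heq (i + 1) hz]
    exact deriv_iter_id_mul isOpen_ball (slice_deriv_diff (hJhol f) hc) i z hz
  -- M₁, M₂ preserve M m
  have hM2mem : ∀ (m : ℕ) (f : H), f ∈ M m → M₂ f ∈ M m := by
    intro m f hf
    rw [hM]
    intro i hi z hz
    rw [key2 f z hz i z hz, (hM m f).mp hf i hi z hz, mul_zero]
  have hM1mem : ∀ (m : ℕ) (f : H), f ∈ M m → M₁ f ∈ M m := by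
    intro m f hf
    rw [hM]
    intro i hi z hz
    cases i with
    | zero =>
        show J (M₁ f) (z, z) = 0
        rw [hM₁ f (z, z) ⟨hz, hz⟩]
        have : d1^[0] (J f) (z, z) = 0 := (hM m f).mp hf 0 (Nat.zero_le m) z hz
        simp only [Function.iterate_zero, id_eq] at this
        rw [this, mul_zero]
    | succ i =>
        rw [key1 f z hz i z hz, (hM m f).mp hf (i + 1) hi z hz,
          (hM m f).mp hf i ((Nat.le_succ i).trans hi) z hz, mul_zero, mul_zero, add_zero]
  -- the main argument, uniform in the operator A
  intro n w hw
  have hww : (w, w) ∈ ball (0 : ℂ) 1 ×ˢ ball (0 : ℂ) 1 := ⟨hw, hw⟩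
  set Kv := k (w, w) n with hKv
  set x := P n Kv with hx
  have hxS : x ∈ S n := hPmem n Kv
  have main : ∀ (A : H →L[ℂ] H), (∀ (m : ℕ) (g : H), g ∈ M m → A g ∈ M m) →
      (∀ g : H, g ∈ S n → ⟪Kv, A g⟫_ℂ = w * ⟪Kv, g⟫_ℂ) →
      P n (ContinuousLinearMap.adjoint A x) = (starRingEnd ℂ) w • x := by
    intro A hA hAk
    have hg : ∀ g ∈ S n, ⟪g, P n (ContinuousLinearMap.adjoint A x)⟫_ℂ
        = ⟪g, (starRingEnd ℂ) w • x⟫_ℂ := by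
      intro g hgS
      rw [hinner_P n g _ hgS, ContinuousLinearMap.adjoint_inner_right]
      set u := A g with hu
      -- ⟪u, x⟫ = ⟪P n u, x⟫
      have h1 : ⟪u, x⟫_ℂ = ⟪P n u, x⟫_ℂ := by
        have h := (Submodule.mem_orthogonal' _ _).mp (hPorth n u) x hxS
        rw [inner_sub_left] at h
        linear_combination h
      -- ⟪P n u, x⟫ = ⟪P n u, Kv⟫
      have h2 : ⟪P n u, x⟫_ℂ = ⟪P n u, Kv⟫_ℂ := hinner_P n _ Kv (hPmem n u)
      -- u - P n u ∈ M n
      have hvM : u - P n u ∈ M n := by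
        apply hard n _ (hPorth n u)
        intro m hm
        subst hm
        have hgM : g ∈ M m := by
          have := hgS; rw [hSsucc] at this; exact this.1
        have hPuM : P (m + 1) u ∈ M m := by
          have := hPmem (m + 1) u; rw [hSsucc] at this; exact this.1
        exact Submodule.sub_mem _ (hA m g hgM) hPuM
      -- ⟪P n u, Kv⟫ = ⟪u, Kv⟫
      have h3 : ⟪P n u, Kv⟫_ℂ = ⟪u, Kv⟫_ℂ := by
        have hz : ⟪Kv, u - P n u⟫_ℂ = 0 := by
          rw [hKv, hk _ (w, w) hww n]
          exact (hM n _).mp hvM n le_rfl w hw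
        have hz' : ⟪u - P n u, Kv⟫_ℂ = 0 := by
          rw [← inner_conj_symm, hz, map_zero]
        rw [inner_sub_left] at hz'
        linear_combination -hz'
      -- ⟪u, Kv⟫ = conj w * ⟪g, Kv⟫
      have h4 : ⟪u, Kv⟫_ℂ = (starRingEnd ℂ) w * ⟪g, Kv⟫_ℂ := by
        rw [← inner_conj_symm, hAk g hgS, map_mul, inner_conj_symm]
      rw [h1, h2, h3, h4, inner_smul_right, hinner_P n g Kv hgS]
    have hTS : P n (ContinuousLinearMap.adjoint A x) ∈ S n := hPmem n _
    have hRS : (starRingEnd ℂ) w • x ∈ S n := Submodule.smul_mem _ _ hxS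
    have hdS : P n (ContinuousLinearMap.adjoint A x) - (starRingEnd ℂ) w • x ∈ S n :=
      Submodule.sub_mem _ hTS hRS
    have hz : ⟪P n (ContinuousLinearMap.adjoint A x) - (starRingEnd ℂ) w • x,
        P n (ContinuousLinearMap.adjoint A x) - (starRingEnd ℂ) w • x⟫_ℂ = 0 := by
      rw [inner_sub_right, hg _ hdS, sub_self]
    exact sub_eq_zero.mp (inner_self_eq_zero.mp hz)
  constructor
  · apply main M₁ hM1mem
    intro g hgS
    rw [hKv, hk _ (w, w) hww n, hk _ (w, w) hww n]
    cases n with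
    | zero =>
        show J (M₁ g) (w, w) = w * J g (w, w)
        exact hM₁ g (w, w) hww
    | succ m =>
        rw [key1 g w hw m w hw]
        have hgM : g ∈ M m := by rw [hSsucc] at hgS; exact hgS.1
        rw [(hM m g).mp hgM m le_rfl w hw, mul_zero, zero_add]
  · apply main M₂ hM2mem
    intro g hgS
    rw [hKv, hk _ (w, w) hww n, hk _ (w, w) hww n]
    exact key2 g w hw n w hw
end
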